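/- Let X be a compact metric space, H₀ a real Hilbert space, and Φ : X → H₀ a map satisfying dist(x, x') = ‖Φ(x) − Φ(x')‖ for all x, x' ∈ X (i.e., the metric of X is the kernel metric induced by Φ). Then the image S = { ∫_X Φ dμ : μ a Borel probability measure on X } of the set of all Borel probability measures under the kernel mean embedding is a compact subset of H₀. -/

import Mathlib

open MeasureTheory Set Filter Topology

private lemma sum_range_mul_group (f : ℕ → ℝ) (i K : ℕ) :
    ∑ x ∈ Finset.range (i * K), f x
      = ∑ a ∈ Finset.range i, ∑ m ∈ Finset.range K, f (a * K + m) := by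
  induction i with
  | zero => simp
  | succ i ih =>
      rw [Finset.sum_range_succ, ← ih, Nat.succ_mul, Finset.sum_range_add]

private lemma iUnion_Ico_consec (o : ℕ → ℝ) (ho : Monotone o) (m : ℕ) :
    ⋃ i ∈ Finset.range m, Set.Ico (o i) (o (i + 1)) = Set.Ico (o 0) (o m) := by
  induction m with
  | zero => simp
  | succ m ih =>
      rw [Finset.range_add_one, Finset.set_biUnion_insert, ih, Set.union_comm,
        Set.Ico_union_Ico_eq_Ico (ho (Nat.zero_le m)) (ho (Nat.le_succ m))]

private lemma exists_sigma {X : Type*} [MetricSpace X] [CompactSpace X] [Nonempty X]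
    [MeasurableSpace X] [BorelSpace X] (r : ℝ) (hr : 0 < r) :
    ∃ (k : ℕ) (σ : X → ℕ), 0 < k ∧ Measurable σ ∧ (∀ x, σ x < k) ∧
      ∀ x x', σ x = σ x' → dist x x' ≤ 2 * r := by
  obtain ⟨s, hs⟩ := isCompact_univ.elim_finite_subcover
    (fun c : X => Metric.ball c r) (fun c => Metric.isOpen_ball)
    (fun x _ => Set.mem_iUnion.2 ⟨x, Metric.mem_ball_self hr⟩)
  -- enumerate s via a list
  set L := s.toList with hL
  have hcov : ∀ x : X, ∃ i, i < L.length ∧ dist x (L.getD i (Classical.arbitrary X)) < r := by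
    intro x
    have := hs (Set.mem_univ x)
    simp only [Set.mem_iUnion] at this
    obtain ⟨c, hc, hxc⟩ := this
    have hcl : c ∈ L := by simpa [hL] using hc
    obtain ⟨i, hi, hgi⟩ := List.getElem_of_mem hcl
    refine ⟨i, hi, ?_⟩
    rw [List.getD_eq_getElem _ _ hi, hgi]
    simpa [Metric.mem_ball] using hxc
  refine ⟨L.length, fun x => Nat.find (hcov x), ?_, ?_, ?_, ?_⟩
  · obtain ⟨i, hi, _⟩ := hcov (Classical.arbitrary X); omega
  · apply measurable_to_countable'
    intro i
    have : (fun x => Nat.find (hcov x)) ⁻¹' {i} =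
        {x : X | (i < L.length ∧ dist x (L.getD i (Classical.arbitrary X)) < r)} ∩
        ⋂ j ∈ Finset.range i, {x : X | ¬ (j < L.length ∧ dist x (L.getD j (Classical.arbitrary X)) < r)} := by
      ext x
      simp only [Set.mem_preimage, Set.mem_singleton_iff, Nat.find_eq_iff, Set.mem_inter_iff,
        Set.mem_iInter, Set.mem_setOf_eq, Finset.mem_range]
    rw [this]
    apply MeasurableSet.inter
    · by_cases h : i < L.length
      · have : {x : X | (i < L.length ∧ dist x (L.getD i (Classical.arbitrary X)) < r)}
            = Metric.ball (L.getD i (Classical.arbitrary X)) r := by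
          ext x; simp [Metric.mem_ball, h]
        rw [this]; exact measurableSet_ball
      · have : {x : X | (i < L.length ∧ dist x (L.getD i (Classical.arbitrary X)) < r)} = ∅ := by
          ext x; simp [h]
        rw [this]; exact MeasurableSet.empty
    · refine MeasurableSet.biInter (Finset.range i).countable_toSet (fun j _ => ?_)
      by_cases h : j < L.length
      · have : {x : X | ¬ (j < L.length ∧ dist x (L.getD j (Classical.arbitrary X)) < r)}
            = (Metric.ball (L.getD j (Classical.arbitrary X)) r)ᶜ := by
          ext x; simp [Metric.mem_ball, h]
        rw [this]; exact measurableSet_ball.compl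
      · have : {x : X | ¬ (j < L.length ∧ dist x (L.getD j (Classical.arbitrary X)) < r)} = Set.univ := by
          ext x; simp [h]
        rw [this]; exact MeasurableSet.univ
  · intro x; exact (Nat.find_spec (hcov x)).1
  · intro x x' hxx'
    have h1 := Nat.find_spec (hcov x)
    have h2 := Nat.find_spec (hcov x')
    have hxx'' : Nat.find (hcov x) = Nat.find (hcov x') := hxx'
    rw [hxx''] at h1
    calc dist x x' ≤ dist x (L.getD (Nat.find (hcov x')) (Classical.arbitrary X))
          + dist x' (L.getD (Nat.find (hcov x')) (Classical.arbitrary X)) := dist_triangle_right _ _ _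
      _ ≤ 2 * r := by nlinarith [h1.2, h2.2]

section Key

variable {X : Type*} [MetricSpace X] [CompactSpace X] [Nonempty X]
    [MeasurableSpace X] [BorelSpace X]
    {H₀ : Type*} [NormedAddCommGroup H₀] [InnerProductSpace ℝ H₀] [CompleteSpace H₀]

private lemma key (Φ : X → H₀) (hΦ : Isometry Φ) (y : H₀) (μs : ℕ → Measure X)
    (hprob : ∀ j, IsProbabilityMeasure (μs j))
    (hy : Tendsto (fun j => ∫ x, Φ x ∂(μs j)) atTop (𝓝 y)) :
    ∃ μ : Measure X, IsProbabilityMeasure μ ∧ y = ∫ x, Φ x ∂μ := by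
  classical
  have hΦc : Continuous Φ := hΦ.continuous
  -- the σ-maps at each level
  have hsig : ∀ n : ℕ, ∃ (k : ℕ) (σ : X → ℕ), 0 < k ∧ Measurable σ ∧ (∀ x, σ x < k) ∧
      ∀ x x', σ x = σ x' → dist x x' ≤ 2 * (1/2) ^ n :=
    fun n => exists_sigma ((1/2) ^ n) (by positivity)
  choose K σ hK hσmeas hσlt hσdiam using hsig
  -- the code maps
  obtain ⟨c, hc0, hcs⟩ : ∃ c : ℕ → X → ℕ, (∀ x, c 0 x = 0) ∧
      ∀ n x, c (n + 1) x = c n x * K n + σ n x :=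
    ⟨fun n => n.rec (fun _ => 0) (fun m cm x => cm x * K m + σ m x), fun _ => rfl,
      fun _ _ => rfl⟩
  obtain ⟨B, hB0, hBs⟩ : ∃ B : ℕ → ℕ, B 0 = 1 ∧ ∀ n, B (n + 1) = B n * K n :=
    ⟨fun n => n.rec 1 (fun m Bm => Bm * K m), rfl, fun _ => rfl⟩
  have hcB : ∀ n x, c n x < B n := by
    intro n
    induction n with
    | zero => intro x; rw [hc0, hB0]; omega
    | succ n ih =>
        intro x
        rw [hcs, hBs]
        have h1 := ih x
        have h2 := hσlt n x
        calc c n x * K n + σ n x < c n x * K n + K n := by omega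
          _ = (c n x + 1) * K n := by ring
          _ ≤ B n * K n := Nat.mul_le_mul_right _ (by omega)
  have hBpos : ∀ n, 0 < B n := fun n => Nat.pos_of_ne_zero (fun h => by
    have := hcB n (Classical.arbitrary X); omega)
  have hcmeas : ∀ n, Measurable (c n) := by
    intro n
    induction n with
    | zero => simpa [funext (hc0)] using measurable_const
    | succ n ih =>
        have : c (n + 1) = fun x => c n x * K n + σ n x := funext (hcs n)
        rw [this]
        exact (ih.mul_const (K n)).add (hσmeas n)
  -- the cells
  obtain ⟨E, hE⟩ : ∃ E : ℕ → ℕ → Set X, ∀ n i, E n i = (c n) ⁻¹' {i} :=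
    ⟨_, fun _ _ => rfl⟩
  have hEmeas : ∀ n i, MeasurableSet (E n i) := fun n i => by
    rw [hE]; exact hcmeas n (measurableSet_singleton i)
  -- diameter bounds
  obtain ⟨C₀, hC₀⟩ : ∃ C, ∀ x x' : X, dist x x' ≤ C := by
    obtain ⟨C, hC⟩ := Metric.isBounded_iff.1 (isCompact_univ : IsCompact (Set.univ : Set X)).isBounded
    exact ⟨C, fun x x' => hC (Set.mem_univ x) (Set.mem_univ x')⟩
  have hC₀0 : 0 ≤ C₀ := le_trans dist_nonneg (hC₀ (Classical.arbitrary X) (Classical.arbitrary X))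
  obtain ⟨D, hD0, hDs⟩ : ∃ D : ℕ → ℝ, D 0 = C₀ ∧ ∀ n, D (n + 1) = 2 * (1/2) ^ n :=
    ⟨fun n => n.rec C₀ (fun m _ => 2 * (1/2) ^ m), rfl, fun _ => rfl⟩
  have hDnn : ∀ n, 0 ≤ D n := by
    intro n; cases n with
    | zero => rw [hD0]; exact hC₀0
    | succ n => rw [hDs]; positivity
  have hDpair : ∀ n i, ∀ x ∈ E n i, ∀ x' ∈ E n i, dist x x' ≤ D n := by
    intro n
    cases n with
    | zero => intro i x _ x' _; rw [hD0]; exact hC₀ x x'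
    | succ n =>
        intro i x hx x' hx'
        rw [hE] at hx hx'
        simp only [Set.mem_preimage, Set.mem_singleton_iff] at hx hx'
        have hcc : c (n+1) x = c (n+1) x' := hx.trans hx'.symm
        rw [hcs, hcs] at hcc
        have hσσ : σ n x = σ n x' := by
          have e1 : (c n x * K n + σ n x) % K n = σ n x := by
            rw [Nat.mul_comm (c n x) (K n), Nat.mul_add_mod]
            exact Nat.mod_eq_of_lt (hσlt n x)
          have e2 : (c n x' * K n + σ n x') % K n = σ n x' := by
            rw [Nat.mul_comm (c n x') (K n), Nat.mul_add_mod]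
            exact Nat.mod_eq_of_lt (hσlt n x')
          rw [← e1, ← e2, hcc]
        rw [hDs]
        exact hσdiam n x x' hσσ
  have hnest : ∀ n i, E (n + 1) i ⊆ E n (i / K n) := by
    intro n i x hx
    rw [hE] at hx ⊢
    simp only [Set.mem_preimage, Set.mem_singleton_iff] at hx ⊢
    subst hx
    rw [hcs, Nat.add_comm, Nat.add_mul_div_right _ _ (hK n),
      Nat.div_eq_of_lt (hσlt n x), Nat.zero_add]
  have hpart : ∀ n, ⋃ i ∈ Finset.range (B n), E n i = Set.univ := by
    intro n
    ext x
    simp only [Set.mem_iUnion, Set.mem_univ, iff_true, Finset.mem_range]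
    exact ⟨c n x, hcB n x, by rw [hE]; rfl⟩
  have hdisj : ∀ n, Set.Pairwise ↑(Finset.range (B n)) (Function.onFun Disjoint (E n)) := by
    intro n i _ i' _ hne
    simp only [Function.onFun, Set.disjoint_left]
    intro x hx hx'
    rw [hE] at hx hx'
    simp only [Set.mem_preimage, Set.mem_singleton_iff] at hx hx'
    exact hne (hx.symm.trans hx')
  have hchild : ∀ n i, E n i = ⋃ m ∈ Finset.range (K n), E (n + 1) (i * K n + m) := by
    intro n i
    ext x
    simp only [hE, Set.mem_preimage, Set.mem_singleton_iff, Set.mem_iUnion, Finset.mem_range]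
    constructor
    · intro h
      exact ⟨σ n x, hσlt n x, by rw [hcs, h]⟩
    · rintro ⟨m, hm, hcx⟩
      rw [hcs] at hcx
      have hdiv : (c n x * K n + σ n x) / K n = (i * K n + m) / K n := by rw [hcx]
      rwa [Nat.add_comm, Nat.add_mul_div_right _ _ (hK n), Nat.div_eq_of_lt (hσlt n x),
        Nat.zero_add, Nat.add_comm, Nat.add_mul_div_right _ _ (hK n), Nat.div_eq_of_lt hm,
        Nat.zero_add] at hdiv
  -- ultrafilter limits of cell weights
  set U : Ultrafilter ℕ := Ultrafilter.of atTop with hU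
  have hUle : (U : Filter ℕ) ≤ atTop := Ultrafilter.of_le atTop
  have hwex : ∀ n i : ℕ, ∃ a : ℝ,
      Tendsto (fun j => (μs j (E n i)).toReal) (U : Filter ℕ) (𝓝 a) := by
    intro n i
    have hmem : ∀ j, (μs j (E n i)).toReal ∈ Set.Icc (0:ℝ) 1 := by
      intro j
      have := hprob j
      constructor
      · exact ENNReal.toReal_nonneg
      · refine ENNReal.toReal_le_of_le_ofReal zero_le_one ?_
        have h1 : μs j (E n i) ≤ μs j Set.univ := measure_mono (Set.subset_univ _)
        simpa using h1
    obtain ⟨a, _, ha⟩ := isCompact_Icc.ultrafilter_le_nhds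
      (U.map (fun j => (μs j (E n i)).toReal))
      (by rw [Ultrafilter.coe_map, le_principal_iff, Filter.mem_map]
          exact Filter.univ_mem' hmem)
    exact ⟨a, ha⟩
  choose w hw using hwex
  have hw0 : ∀ n i, 0 ≤ w n i := fun n i =>
    ge_of_tendsto' (hw n i) (fun j => ENNReal.toReal_nonneg)
  -- seq-level identities
  have hseq_child : ∀ n i j, (μs j (E n i)).toReal
      = ∑ m ∈ Finset.range (K n), (μs j (E (n+1) (i * K n + m))).toReal := by
    intro n i j
    have := hprob j
    have hd : Set.Pairwise ↑(Finset.range (K n))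
        (Function.onFun Disjoint fun m => E (n+1) (i * K n + m)) := by
      intro m _ m' _ hne
      simp only [Function.onFun, Set.disjoint_left]
      intro x hx hx'
      rw [hE] at hx hx'
      simp only [Set.mem_preimage, Set.mem_singleton_iff] at hx hx'
      have : i * K n + m = i * K n + m' := hx.symm.trans hx'
      omega
    rw [hchild n i, measure_biUnion_finset hd (fun m _ => hEmeas _ _), ENNReal.toReal_sum]
    exact fun m _ => measure_ne_top _ _
  have hconsist : ∀ n i, w n i = ∑ m ∈ Finset.range (K n), w (n+1) (i * K n + m) := by
    intro n i
    refine tendsto_nhds_unique (hw n i) ?_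
    have : Tendsto (fun j => ∑ m ∈ Finset.range (K n),
        (μs j (E (n+1) (i * K n + m))).toReal) (U : Filter ℕ)
        (𝓝 (∑ m ∈ Finset.range (K n), w (n+1) (i * K n + m))) :=
      tendsto_finset_sum _ (fun m _ => hw (n+1) (i * K n + m))
    convert this using 1
    funext j
    exact hseq_child n i j
  have hseq_sum1 : ∀ n j, ∑ i ∈ Finset.range (B n), (μs j (E n i)).toReal = 1 := by
    intro n j
    have := hprob j
    rw [← ENNReal.toReal_sum (fun i _ => measure_ne_top _ _),
      ← measure_biUnion_finset (hdisj n) (fun i _ => hEmeas _ _), hpart n]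
    simp
  have hsum1 : ∀ n, ∑ i ∈ Finset.range (B n), w n i = 1 := by
    intro n
    have h1 : Tendsto (fun j => ∑ i ∈ Finset.range (B n), (μs j (E n i)).toReal)
        (U : Filter ℕ) (𝓝 (∑ i ∈ Finset.range (B n), w n i)) :=
      tendsto_finset_sum _ (fun i _ => hw n i)
    have h2 : Tendsto (fun j => ∑ i ∈ Finset.range (B n), (μs j (E n i)).toReal)
        (U : Filter ℕ) (𝓝 1) := by
      have hf : (fun j => ∑ i ∈ Finset.range (B n), (μs j (E n i)).toReal)
          = fun _ => (1:ℝ) := funext (hseq_sum1 n)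
      rw [hf]; exact tendsto_const_nhds
    exact tendsto_nhds_unique h1 h2
  have hwempty : ∀ n i, E n i = ∅ → w n i = 0 := by
    intro n i h
    refine tendsto_nhds_unique (hw n i) ?_
    have : (fun j => (μs j (E n i)).toReal) = fun _ => (0:ℝ) := by
      funext j; rw [h]; simp
    rw [this]
    exact tendsto_const_nhds
  -- the offsets
  obtain ⟨o, ho⟩ : ∃ o : ℕ → ℕ → ℝ, ∀ n i, o n i = ∑ i' ∈ Finset.range i, w n i' :=
    ⟨_, fun _ _ => rfl⟩
  have ho0 : ∀ n, o n 0 = 0 := fun n => by simp [ho]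
  have hosucc : ∀ n i, o n (i + 1) = o n i + w n i := fun n i => by
    rw [ho, ho, Finset.sum_range_succ]
  have homono : ∀ n, Monotone (o n) := by
    intro n i i' hii'
    rw [ho, ho]
    exact Finset.sum_le_sum_of_subset_of_nonneg
      (Finset.range_subset_range.2 hii') (fun i _ _ => hw0 n i)
  have hoB : ∀ n, o n (B n) = 1 := fun n => by rw [ho]; exact hsum1 n
  have hogroup : ∀ n i, o (n+1) (i * K n) = o n i := by
    intro n i
    rw [ho, ho, sum_range_mul_group]
    exact Finset.sum_congr rfl (fun a _ => (hconsist n a).symm)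
  -- the index function: largest i < B n with o n i ≤ t
  obtain ⟨iN, hiN⟩ : ∃ iN : ℕ → ℝ → ℕ,
      ∀ n t, iN n t = sSup {i : ℕ | i < B n ∧ o n i ≤ t} := ⟨_, fun _ _ => rfl⟩
  have hsetbdd : ∀ n t, BddAbove {i : ℕ | i < B n ∧ o n i ≤ t} :=
    fun n t => ⟨B n, fun i hi => le_of_lt hi.1⟩
  have hiN_spec : ∀ n t, 0 ≤ t → t < 1 →
      iN n t < B n ∧ o n (iN n t) ≤ t ∧ t < o n (iN n t + 1) := by
    intro n t ht0 ht1
    have hne : {i : ℕ | i < B n ∧ o n i ≤ t}.Nonempty :=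
      ⟨0, hBpos n, by rw [ho0]; exact ht0⟩
    have hmem := Nat.sSup_mem hne (hsetbdd n t)
    rw [← hiN n t] at hmem
    simp only [Set.mem_setOf_eq] at hmem
    refine ⟨hmem.1, hmem.2, ?_⟩
    have hnotmem : iN n t + 1 ∉ {i : ℕ | i < B n ∧ o n i ≤ t} := by
      intro h
      have := le_csSup (hsetbdd n t) h
      rw [← hiN n t] at this
      omega
    by_cases hlt : iN n t + 1 < B n
    · by_contra hc
      exact hnotmem ⟨hlt, not_lt.1 hc⟩
    · have : B n ≤ iN n t + 1 := not_lt.1 hlt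
      have heq : iN n t + 1 = B n := by omega
      rw [heq, hoB]
      exact ht1
  have hiN_eq : ∀ n t i, 0 ≤ t → t < 1 → i < B n → o n i ≤ t → t < o n (i + 1) →
      iN n t = i := by
    intro n t i ht0 ht1 hiB hle hlt
    obtain ⟨h1, h2, h3⟩ := hiN_spec n t ht0 ht1
    by_contra hne
    rcases Nat.lt_or_ge (iN n t) i with h | h
    · have : iN n t + 1 ≤ i := h
      have := homono n this
      linarith
    · have : i + 1 ≤ iN n t := by omega
      have := homono n this
      linarith
  have hiNmono : ∀ n, Monotone (iN n) := by
    intro n t t' htt'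
    rw [hiN, hiN]
    by_cases hne : {i : ℕ | i < B n ∧ o n i ≤ t}.Nonempty
    · refine csSup_le_csSup (hsetbdd n t') hne (fun i hi => ⟨hi.1, hi.2.trans htt'⟩)
    · rw [Set.not_nonempty_iff_eq_empty.1 hne]
      simp [csSup_empty]
  have hiNmeas : ∀ n, Measurable (iN n) := by
    intro n
    apply measurable_to_countable'
    intro i
    have : OrdConnected ((iN n) ⁻¹' {i}) := by
      constructor
      intro a ha b hb z hz
      simp only [Set.mem_preimage, Set.mem_singleton_iff] at ha hb ⊢
      have h1 := hiNmono n hz.1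
      have h2 := hiNmono n hz.2
      rw [ha] at h1
      rw [hb] at h2
      omega
    exact this.measurableSet
  -- chosen points of cells
  obtain ⟨pt, hpt⟩ : ∃ pt : ℕ → ℕ → X, ∀ n i, (E n i).Nonempty → pt n i ∈ E n i :=
    ⟨fun n i => if h : (E n i).Nonempty then h.choose else Classical.arbitrary X,
      fun n i h => by simp only [dif_pos h]; exact h.choose_spec⟩
  have hwpos_ne : ∀ n i, 0 < w n i → (E n i).Nonempty := by
    intro n i hpos
    by_contra h
    rw [hwempty n i (Set.not_nonempty_iff_eq_empty.1 h)] at hpos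
    exact lt_irrefl _ hpos
  -- the step functions
  obtain ⟨f, hf⟩ : ∃ f : ℕ → ℝ → X,
      ∀ n t, f n t = if 0 ≤ t ∧ t < 1 then pt n (iN n t) else Classical.arbitrary X :=
    ⟨_, fun _ _ => rfl⟩
  have hfmeas : ∀ n, Measurable (f n) := by
    intro n
    have : f n = fun t => if t ∈ Set.Ico (0:ℝ) 1 then pt n (iN n t)
        else Classical.arbitrary X := by
      funext t; rw [hf]; rfl
    rw [this]
    exact Measurable.ite measurableSet_Ico
      (measurable_from_nat.comp (hiNmeas n)) measurable_const
  have hwpost : ∀ n t, 0 ≤ t → t < 1 → 0 < w n (iN n t) := by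
    intro n t ht0 ht1
    obtain ⟨_, h2, h3⟩ := hiN_spec n t ht0 ht1
    rw [hosucc] at h3
    linarith
  have hfmem : ∀ n t, 0 ≤ t → t < 1 → f n t ∈ E n (iN n t) := by
    intro n t ht0 ht1
    rw [hf, if_pos ⟨ht0, ht1⟩]
    exact hpt n _ (hwpos_ne n _ (hwpost n t ht0 ht1))
  -- index compatibility between consecutive levels
  have hidx : ∀ n t, 0 ≤ t → t < 1 → iN n t = iN (n+1) t / K n := by
    intro n t ht0 ht1
    obtain ⟨hj1, hj2, hj3⟩ := hiN_spec (n+1) t ht0 ht1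
    set j := iN (n+1) t with hjdef
    have hle' : o n (j / K n) ≤ t := by
      have h1 : (j / K n) * K n ≤ j := Nat.div_mul_le_self j (K n)
      have h2 := homono (n+1) h1
      rw [hogroup] at h2
      exact h2.trans hj2
    have hlt' : t < o n (j / K n + 1) := by
      have h1 : j + 1 ≤ (j / K n + 1) * K n := by
        have h2 := Nat.div_add_mod j (K n)
        have h3 := Nat.mod_lt j (hK n)
        have h4 : (j / K n + 1) * K n = K n * (j / K n) + K n := by ring
        omega
      have h2 := homono (n+1) h1
      rw [hogroup] at h2
      exact lt_of_lt_of_le hj3 h2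
    have hB' : j / K n < B n := by
      rw [hBs] at hj1
      exact (Nat.div_lt_iff_lt_mul (hK n)).2 hj1
    exact hiN_eq n t (j / K n) ht0 ht1 hB' hle' hlt'
  -- geometric bound and limit functions
  obtain ⟨Cg, hCg4, hCgC₀⟩ : ∃ Cg : ℝ, 4 ≤ Cg ∧ C₀ ≤ Cg :=
    ⟨max C₀ 4, le_max_right _ _, le_max_left _ _⟩
  have hDle : ∀ n, D n ≤ Cg * (1/2)^n := by
    intro n; cases n with
    | zero => rw [hD0]; simpa using hCgC₀
    | succ n =>
        rw [hDs]
        have h1 : (2:ℝ) * (1/2)^n = 4 * (1/2)^(n+1) := by ring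
        rw [h1]
        have h0 : (0:ℝ) < (1/2)^(n+1) := by positivity
        nlinarith
  have hD0' : Tendsto D atTop (𝓝 0) := by
    refine squeeze_zero (fun n => hDnn n) (fun n => hDle n) ?_
    have := tendsto_pow_atTop_nhds_zero_of_lt_one (r := (1/2:ℝ)) (by norm_num) (by norm_num)
    simpa using this.const_mul Cg
  have hcauchy : ∀ t : ℝ, CauchySeq (fun n => f n t) := by
    intro t
    apply cauchySeq_of_le_geometric (1/2 : ℝ) Cg (by norm_num)
    intro n
    have hCg0 : (0:ℝ) ≤ Cg * (1/2)^n := by positivity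
    by_cases ht : 0 ≤ t ∧ t < 1
    · have hmem1 := hfmem n t ht.1 ht.2
      have hmem2 := hfmem (n+1) t ht.1 ht.2
      have hsub : E (n+1) (iN (n+1) t) ⊆ E n (iN n t) := by
        rw [hidx n t ht.1 ht.2]
        exact hnest n _
      exact (hDpair n (iN n t) _ hmem1 _ (hsub hmem2)).trans (hDle n)
    · have he : f n t = f (n+1) t := by rw [hf, hf, if_neg ht, if_neg ht]
      rw [he, dist_self]
      exact hCg0
  have hFex : ∀ t, ∃ l, Tendsto (fun n => f n t) atTop (𝓝 l) :=
    fun t => cauchySeq_tendsto_of_complete (hcauchy t)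
  choose F hF using hFex
  have hFmeas : Measurable F :=
    measurable_of_tendsto_metrizable (fun n => hfmeas n) (tendsto_pi_nhds.2 hF)
  -- boundedness and measurability of Φ
  obtain ⟨M, hM⟩ : ∃ M : ℝ, ∀ x : X, ‖Φ x‖ ≤ M := by
    obtain ⟨M, hM⟩ := (isCompact_range hΦc).isBounded.subset_closedBall 0
    exact ⟨M, fun x => by
      have := hM (Set.mem_range_self x)
      simpa [Metric.mem_closedBall, dist_eq_norm] using this⟩
  have hΦsm : StronglyMeasurable Φ := hΦc.stronglyMeasurable
  have hΦint : ∀ ν : Measure X, IsProbabilityMeasure ν → Integrable Φ ν := by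
    intro ν hν
    haveI := hν
    exact ⟨hΦsm.aestronglyMeasurable, HasFiniteIntegral.of_bounded (C := M) (ae_of_all _ hM)⟩
  -- the key estimate: discrete sums approximate y
  have hTbound : ∀ n, ‖(∑ i ∈ Finset.range (B n), w n i • Φ (pt n i)) - y‖ ≤ D n := by
    intro n
    have hperj : ∀ j, ‖(∑ i ∈ Finset.range (B n), (μs j (E n i)).toReal • Φ (pt n i))
        - ∫ x, Φ x ∂(μs j)‖ ≤ D n := by
      intro j
      haveI := hprob j
      have hint : Integrable Φ (μs j) := hΦint _ (hprob j)
      have hdecomp : ∫ x, Φ x ∂(μs j)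
          = ∑ i ∈ Finset.range (B n), ∫ x in E n i, Φ x ∂(μs j) := by
        rw [← setIntegral_univ (f := Φ) (μ := μs j), ← hpart n,
          integral_biUnion_finset _ (fun i _ => hEmeas n i) (hdisj n)
            (fun i _ => hint.integrableOn)]
      rw [hdecomp, ← Finset.sum_sub_distrib]
      refine (norm_sum_le _ _).trans ?_
      have hterm : ∀ i ∈ Finset.range (B n),
          ‖(μs j (E n i)).toReal • Φ (pt n i) - ∫ x in E n i, Φ x ∂(μs j)‖
            ≤ D n * (μs j (E n i)).toReal := by
        intro i _
        by_cases hne : (E n i).Nonempty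
        · have hptmem := hpt n i hne
          rw [← measureReal_def, (setIntegral_const (μ := μs j) (s := E n i) (Φ (pt n i))).symm.trans rfl,
            ← integral_sub (integrableOn_const (C := Φ (pt n i)) (measure_ne_top _ _))
              hint.integrableOn]
          refine norm_setIntegral_le_of_norm_le_const (measure_lt_top _ _) ?_
          intro x hx
          rw [← dist_eq_norm, hΦ.dist_eq]
          exact hDpair n i _ hptmem _ hx
        · rw [Set.not_nonempty_iff_eq_empty.1 hne]
          simp
      calc ∑ i ∈ Finset.range (B n),
            ‖(μs j (E n i)).toReal • Φ (pt n i) - ∫ x in E n i, Φ x ∂(μs j)‖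
          ≤ ∑ i ∈ Finset.range (B n), D n * (μs j (E n i)).toReal :=
            Finset.sum_le_sum hterm
        _ = D n * ∑ i ∈ Finset.range (B n), (μs j (E n i)).toReal := by
            rw [Finset.mul_sum]
        _ = D n := by rw [hseq_sum1 n j, mul_one]
    have h1 : Tendsto (fun j => ∑ i ∈ Finset.range (B n), (μs j (E n i)).toReal • Φ (pt n i))
        (U : Filter ℕ) (𝓝 (∑ i ∈ Finset.range (B n), w n i • Φ (pt n i))) :=
      tendsto_finset_sum _ (fun i _ => (hw n i).smul_const _)
    have h2 : Tendsto (fun j => ∫ x, Φ x ∂(μs j)) (U : Filter ℕ) (𝓝 y) := hy.mono_left hUle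
    have h3 := (h1.sub h2).norm
    exact le_of_tendsto h3 (Filter.Eventually.of_forall hperj)
  -- nonnegativity of offsets
  have hoNN : ∀ n i, 0 ≤ o n i := by
    intro n i
    rw [ho]
    exact Finset.sum_nonneg (fun i' _ => hw0 n i')
  -- the step-function integrals
  have hfin : ∀ a b : ℝ, IsFiniteMeasure (volume.restrict (Set.Ico a b)) := by
    intro a b
    constructor
    rw [Measure.restrict_apply_univ, Real.volume_Ico]
    exact ENNReal.ofReal_lt_top
  have hstep : ∀ n, (∫ t in Set.Ico (0:ℝ) 1, Φ (f n t))
      = ∑ i ∈ Finset.range (B n), w n i • Φ (pt n i) := by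
    intro n
    have hIcoeq : Set.Ico (0:ℝ) 1
        = ⋃ i ∈ Finset.range (B n), Set.Ico (o n i) (o n (i+1)) := by
      rw [iUnion_Ico_consec (o n) (homono n) (B n), ho0, hoB]
    have hintOn : ∀ i : ℕ, IntegrableOn (fun t => Φ (f n t))
        (Set.Ico (o n i) (o n (i+1))) volume := by
      intro i
      haveI := hfin (o n i) (o n (i+1))
      exact ⟨(hΦsm.comp_measurable (hfmeas n)).aestronglyMeasurable.restrict,
        HasFiniteIntegral.of_bounded (C := M) (ae_of_all _ (fun t => hM _))⟩
    have hpairdisj : Set.Pairwise ↑(Finset.range (B n))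
        (Function.onFun Disjoint fun i => Set.Ico (o n i) (o n (i+1))) := by
      intro a _ b _ hne
      simp only [Function.onFun]
      rw [Set.Ico_disjoint_Ico]
      rcases lt_or_gt_of_ne hne with h | h
      · exact le_trans (min_le_left _ _)
          (le_trans (homono n (by omega : a + 1 ≤ b)) (le_max_right _ _))
      · exact le_trans (min_le_right _ _)
          (le_trans (homono n (by omega : b + 1 ≤ a)) (le_max_left _ _))
    rw [hIcoeq, integral_biUnion_finset _ (fun i _ => measurableSet_Ico)
      hpairdisj (fun i _ => hintOn i)]
    refine Finset.sum_congr rfl (fun i hi => ?_)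
    have hfeq : ∀ t ∈ Set.Ico (o n i) (o n (i+1)), Φ (f n t) = Φ (pt n i) := by
      intro t ht
      have hiB : i < B n := Finset.mem_range.1 hi
      have ht0 : (0:ℝ) ≤ t := le_trans (hoNN n i) ht.1
      have ht1 : t < 1 := lt_of_lt_of_le ht.2 (by rw [← hoB n]; exact homono n hiB)
      have : iN n t = i := hiN_eq n t i ht0 ht1 hiB ht.1 ht.2
      rw [hf, if_pos ⟨ht0, ht1⟩, this]
    rw [setIntegral_congr_fun measurableSet_Ico hfeq, setIntegral_const, measureReal_def, Real.volume_Ico,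
      hosucc]
    congr 1
    rw [add_sub_cancel_left, ENNReal.toReal_ofReal (hw0 n i)]
  -- dominated convergence
  have hDCT : Tendsto (fun n => ∫ t in Set.Ico (0:ℝ) 1, Φ (f n t)) atTop
      (𝓝 (∫ t in Set.Ico (0:ℝ) 1, Φ (F t))) := by
    haveI := hfin (0:ℝ) 1
    exact tendsto_integral_of_dominated_convergence (fun _ => M)
      (fun n => (hΦsm.comp_measurable (hfmeas n)).aestronglyMeasurable.restrict)
      (integrable_const M)
      (fun n => ae_of_all _ (fun t => hM _))
      (ae_of_all _ (fun t => ((hΦc.tendsto _).comp (hF t))))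
  have hTy : Tendsto (fun n => ∑ i ∈ Finset.range (B n), w n i • Φ (pt n i)) atTop (𝓝 y) := by
    have h0 : Tendsto (fun n => (∑ i ∈ Finset.range (B n), w n i • Φ (pt n i)) - y) atTop
        (𝓝 0) := squeeze_zero_norm (fun n => hTbound n) hD0'
    have := h0.add (tendsto_const_nhds (x := y))
    simpa using this
  have hyint : (∫ t in Set.Ico (0:ℝ) 1, Φ (F t)) = y := by
    refine tendsto_nhds_unique hDCT ?_
    have heq : (fun n => ∫ t in Set.Ico (0:ℝ) 1, Φ (f n t))
        = fun n => ∑ i ∈ Finset.range (B n), w n i • Φ (pt n i) := funext hstep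
    rw [heq]
    exact hTy
  haveI hPIco : IsProbabilityMeasure (volume.restrict (Set.Ico (0:ℝ) 1)) := by
    constructor
    rw [Measure.restrict_apply_univ, Real.volume_Ico]
    norm_num
  refine ⟨Measure.map F (volume.restrict (Set.Ico (0:ℝ) 1)), ?_, ?_⟩
  · exact Measure.isProbabilityMeasure_map hFmeas.aemeasurable
  · rw [integral_map hFmeas.aemeasurable hΦsm.aestronglyMeasurable]
    exact hyint.symm




end Key

/-- If `X` is a compact metric space whose metric is the kernel metric induced by the
feature map `Φ : X → H₀` (i.e. `dist x x' = ‖Φ x - Φ x'‖`), then the image of the set of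
all Borel probability measures on `X` under the kernel mean embedding `μ ↦ ∫ x, Φ x ∂μ`
is a compact subset of `H₀`. -/
theorem kme_image_compact
    {X : Type*} [MetricSpace X] [CompactSpace X] [MeasurableSpace X] [BorelSpace X]
    {H₀ : Type*} [NormedAddCommGroup H₀] [InnerProductSpace ℝ H₀] [CompleteSpace H₀]
    (Φ : X → H₀) (hΦiso : ∀ x x' : X, dist x x' = ‖Φ x - Φ x'‖) :
    IsCompact {h : H₀ | ∃ μ : Measure X, IsProbabilityMeasure μ ∧ h = ∫ x, Φ x ∂μ} := by
  classical
  cases isEmpty_or_nonempty X with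
  | inl hempty =>
      have hemp : {h : H₀ | ∃ μ : Measure X, IsProbabilityMeasure μ ∧ h = ∫ x, Φ x ∂μ}
          = ∅ := by
        ext h
        simp only [Set.mem_setOf_eq, Set.mem_empty_iff_false, iff_false]
        rintro ⟨μ, hμ, -⟩
        have h1 : μ Set.univ = 1 := hμ.measure_univ
        have h2 : (Set.univ : Set X) = ∅ := Set.univ_eq_empty_iff.2 hempty
        rw [h2, measure_empty] at h1
        exact zero_ne_one h1
      rw [hemp]
      exact isCompact_empty
  | inr hne =>
      have hΦ : Isometry Φ := Isometry.of_dist_eq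
        (fun a b => by rw [dist_eq_norm]; exact (hΦiso a b).symm)
      have hΦc : Continuous Φ := hΦ.continuous
      -- boundedness of Φ
      obtain ⟨M, hM⟩ : ∃ M : ℝ, ∀ x : X, ‖Φ x‖ ≤ M := by
        obtain ⟨M, hM⟩ := (isCompact_range hΦc).isBounded.subset_closedBall 0
        exact ⟨M, fun x => by
          have := hM (Set.mem_range_self x)
          simpa [Metric.mem_closedBall, dist_eq_norm] using this⟩
      have hΦsm : StronglyMeasurable Φ := hΦc.stronglyMeasurable
      have hΦint : ∀ ν : Measure X, IsProbabilityMeasure ν → Integrable Φ ν := by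
        intro ν hν
        haveI := hν
        exact ⟨hΦsm.aestronglyMeasurable,
          HasFiniteIntegral.of_bounded (C := M) (ae_of_all _ hM)⟩
      have hclosed : IsClosed {h : H₀ | ∃ μ : Measure X,
          IsProbabilityMeasure μ ∧ h = ∫ x, Φ x ∂μ} := by
        refine isClosed_of_closure_subset ?_
        intro y hy
        rw [mem_closure_iff_seq_limit] at hy
        obtain ⟨u, hu, hulim⟩ := hy
        choose μs hμs hμeq using hu
        have heq : (fun j => ∫ x, Φ x ∂(μs j)) = u := by
          funext j; exact (hμeq j).symm
        obtain ⟨μ, hμ, hy'⟩ := key Φ hΦ y μs hμs (by rw [heq]; exact hulim)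
        exact ⟨μ, hμ, hy'⟩
      have hsub : {h : H₀ | ∃ μ : Measure X, IsProbabilityMeasure μ ∧ h = ∫ x, Φ x ∂μ}
          ⊆ closure (convexHull ℝ (Set.range Φ)) := by
        rintro h ⟨μ, hμ, rfl⟩
        haveI := hμ
        exact (convex_convexHull ℝ _).closure.integral_mem isClosed_closure
          (ae_of_all _ (fun x => subset_closure
            (subset_convexHull ℝ _ (Set.mem_range_self x)))) (hΦint μ hμ)
      have hKcomp : IsCompact (closure (convexHull ℝ (Set.range Φ))) :=
        TotallyBounded.isCompact_of_isClosed
          ((totallyBounded_convexHull.2 (isCompact_range hΦc).totallyBounded).closure)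
          isClosed_closure
      exact hKcomp.of_isClosed_subset hclosed hsub
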